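/- A state-finite automaton A is retractable if and only if A is a strong direct sum of finitely many state-finite retractable automata each containing a kernel. -/
import Mathlib


universe u v

/-- The transition function extended to words (`X*`). -/
def deltaStar {A X : Type*} (δ : A → X → A) : A → List X → A
  | a, [] => a
  | a, x :: p => deltaStar δ (δ a x) p

/-- `B` is a subautomaton of the automaton with transition `δ`. -/
def IsSubaut {A X : Type*} (δ : A → X → A) (B : Set A) : Prop :=
  B.Nonempty ∧ ∀ b ∈ B, ∀ x : X, δ b x ∈ B

/-- `φ` is a retract homomorphism of the automaton onto the subautomaton `B`:
a homomorphism of `A` onto `B` leaving the elements of `B` fixed. -/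
def IsRetractHom {A X : Type*} (δ : A → X → A) (B : Set A) (φ : A → A) : Prop :=
  (∀ a, φ a ∈ B) ∧ (∀ b ∈ B, φ b = b) ∧ ∀ a x, φ (δ a x) = δ (φ a) x

/-- `B` is a retract subautomaton. -/
def IsRetract {A X : Type*} (δ : A → X → A) (B : Set A) : Prop :=
  ∃ φ, IsRetractHom δ B φ

/-- An automaton is retractable if every subautomaton is retract. -/
def Retractable {A X : Type*} (δ : A → X → A) : Prop :=
  ∀ B, IsSubaut δ B → IsRetract δ B

/-- Retractability of the subautomaton on the carrier `D` (homomorphisms are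
represented by functions on the ambient state set, restricted to `D`). -/
def RetractableOn {A X : Type*} (δ : A → X → A) (D : Set A) : Prop :=
  ∀ C ⊆ D, IsSubaut δ C →
    ∃ φ : A → A, (∀ a ∈ D, φ a ∈ C) ∧ (∀ c ∈ C, φ c = c) ∧
      ∀ a ∈ D, ∀ x, φ (δ a x) = δ (φ a) x

/-- The principal subautomaton `R(a) = δ(a, X*)` generated by `a`. -/
def Rset {A X : Type*} (δ : A → X → A) (a : A) : Set A :=
  {b | ∃ p : List X, deltaStar δ a p = b}

/-- The `R`-class `R_a = {b : R(b) = R(a)}`. -/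
def Rclass {A X : Type*} (δ : A → X → A) (a : A) : Set A :=
  {b | Rset δ b = Rset δ a}

/-- `R[a] = R(a) − R_a`. -/
def Rideal {A X : Type*} (δ : A → X → A) (a : A) : Set A :=
  Rset δ a \ Rclass δ a

/-- The Rees congruence induced by `B`: two states are related iff they are
equal or both lie in `B`. -/
def reesRel {A : Type*} (B : Set A) (u v : A) : Prop :=
  u = v ∨ (u ∈ B ∧ v ∈ B)

/-- A minimal subautomaton: a subautomaton with no proper subautomaton. -/
def IsMinimalSubaut {A X : Type*} (δ : A → X → A) (B : Set A) : Prop :=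
  IsSubaut δ B ∧ ∀ C ⊆ B, IsSubaut δ C → C = B

/-- The automaton has a kernel: a subautomaton contained in every subautomaton. -/
def HasKernel {A X : Type*} (δ : A → X → A) : Prop :=
  ∃ K, IsSubaut δ K ∧ ∀ B, IsSubaut δ B → K ⊆ B

/-- The principal factor `R{a}` (the Rees factor of `R(a)` modulo `R[a]`,
described via the Rees congruence) is strongly connected. -/
def FactorSC {A X : Type*} (δ : A → X → A) (a : A) : Prop :=
  ∀ b ∈ Rset δ a, ∀ c ∈ Rset δ a,
    ∃ p : List X, p ≠ [] ∧ reesRel (Rideal δ a) (deltaStar δ b p) c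

/-- The principal factor `R{a}` is a strongly trap-connected non-trivial
one-trap automaton (with trap the class of `t`). -/
def FactorSTC {A X : Type*} (δ : A → X → A) (a : A) : Prop :=
  ∃ t ∈ Rset δ a,
    (∀ x, reesRel (Rideal δ a) (δ t x) t) ∧
    (∃ b ∈ Rset δ a, ¬ reesRel (Rideal δ a) b t) ∧
    (∀ b ∈ Rset δ a, (∀ x, reesRel (Rideal δ a) (δ b x) b) → reesRel (Rideal δ a) b t) ∧
    (∀ b ∈ Rset δ a, ∀ c ∈ Rset δ a, ¬ reesRel (Rideal δ a) b t →
      ∃ p : List X, p ≠ [] ∧ reesRel (Rideal δ a) (deltaStar δ b p) c)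

/-- The principal factor `R{a}` is a strongly trapped non-trivial one-trap
automaton (with trap the class of `t`). -/
def FactorST {A X : Type*} (δ : A → X → A) (a : A) : Prop :=
  ∃ t ∈ Rset δ a,
    (∃ b ∈ Rset δ a, ¬ reesRel (Rideal δ a) b t) ∧
    (∀ b ∈ Rset δ a, (∀ x, reesRel (Rideal δ a) (δ b x) b) → reesRel (Rideal δ a) b t) ∧
    (∀ b ∈ Rset δ a, ∀ x, reesRel (Rideal δ a) (δ b x) t)

/-- Semiconnected: every principal factor is strongly connected or strongly
trap-connected. -/
def Semiconnected {A X : Type*} (δ : A → X → A) : Prop :=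
  ∀ a, FactorSC δ a ∨ FactorSTC δ a

/-- The subautomaton on `D` is semiconnected, via the characterization: for
every subautomaton `C ⊆ D` and every `a ∈ C` there are `b ∈ C` and a nonempty
word `p` with `a = δ(b,p)`. -/
def SemiconnectedOn {A X : Type*} (δ : A → X → A) (D : Set A) : Prop :=
  ∀ C ⊆ D, IsSubaut δ C → ∀ a ∈ C, ∃ b ∈ C, ∃ p : List X, p ≠ [] ∧ deltaStar δ b p = a

/-- The automaton is a dilation of its subautomaton `B`. -/
def IsDilationOf {A X : Type*} (δ : A → X → A) (B : Set A) : Prop :=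
  IsSubaut δ B ∧ ∃ φ : A → A, (∀ a, φ a ∈ B) ∧ (∀ b ∈ B, φ b = b) ∧
    ∀ a x, δ a x = δ (φ a) x

/-- Extension of a partial transition function (`none` = the removed trap)
to words. -/
def pStar {C X : Type*} (d : C → X → Option C) : C → List X → Option C
  | a, [] => some a
  | a, x :: p => (d a x).bind fun b => pStar d b p

/-- The data of the Construction: a finite tree `(T, le)` with least element
`i0`; `C i` is the trap-removed part `A⁰ᵢ` of the automaton `Aᵢ`, with partial
transition `d i` (`none` means the trap); `A_{i0}` is strongly connected and
the other `Aᵢ` are non-trivial strongly trap-connected one-trap automata;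
`Φ i j` are the composite partial homomorphisms along covering chains
(given here as coherent data whose covering components satisfy conditions
(ii) and (iii)); `δ'` is the glued transition function on `A = ⋃ A⁰ᵢ`. -/
def ConstructionSpec {X : Type*} (T : Type*) (le : T → T → Prop) (i0 : T)
    (C : T → Type*) (d : ∀ i, C i → X → Option (C i))
    (Φ : ∀ i j, le j i → C i → C j)
    (δ' : (Σ i, C i) → X → Σ i, C i) : Prop :=
  (∀ i, le i i) ∧ (∀ i j, le i j → le j i → i = j) ∧
  (∀ i j k, le i j → le j k → le i k) ∧
  Finite T ∧
  (∀ S : Set T, S.Nonempty → (∃ u, ∀ i ∈ S, le i u) → ∃ g ∈ S, ∀ i ∈ S, le i g) ∧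
  (∀ i, le i0 i) ∧
  Nonempty (C i0) ∧
  (∀ (a : C i0) (x : X), (d i0 a x).isSome) ∧
  (∀ a b : C i0, ∃ p : List X, p ≠ [] ∧ pStar (d i0) a p = some b) ∧
  (∀ i, i ≠ i0 → Nonempty (C i) ∧
    (∀ a b : C i, ∃ p : List X, p ≠ [] ∧ pStar (d i) a p = some b) ∧
    (∀ a : C i, ∃ p : List X, p ≠ [] ∧ pStar (d i) a p = none)) ∧
  (∀ i (h : le i i) (a : C i), Φ i i h a = a) ∧
  (∀ i j k (h1 : le j i) (h2 : le k j) (h3 : le k i) (a : C i),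
    Φ j k h2 (Φ i j h1 a) = Φ i k h3 a) ∧
  (∀ i j (h : le j i), i ≠ j → (∀ k, le j k → le k i → k = j ∨ k = i) →
    (∀ (a : C i) (x : X) (b : C i),
      d i a x = some b → d j (Φ i j h a) x = some (Φ i j h b)) ∧
    ∃ (a : C i) (x : X), d i a x = none ∧ (d j (Φ i j h a) x).isSome) ∧
  (∀ i (a : C i) (x : X), ∃ (j : T) (hj : le j i) (b : C j),
    δ' ⟨i, a⟩ x = ⟨j, b⟩ ∧ d j (Φ i j hj a) x = some b ∧
    ∀ k (hk : le k i), (d k (Φ i k hk a) x).isSome → le k j)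


section Aux

variable {A X : Type*}

lemma deltaStar_append (δ : A → X → A) (a : A) (p q : List X) :
    deltaStar δ a (p ++ q) = deltaStar δ (deltaStar δ a p) q := by
  induction p generalizing a with
  | nil => rfl
  | cons x p ih => simp [deltaStar, ih]

lemma deltaStar_mem {δ : A → X → A} {B : Set A} (hB : IsSubaut δ B) {b : A}
    (hb : b ∈ B) (p : List X) : deltaStar δ b p ∈ B := by
  induction p generalizing b with
  | nil => exact hb
  | cons x p ih => exact ih (hB.2 b hb x)

lemma mem_Rset_self (δ : A → X → A) (a : A) : a ∈ Rset δ a := ⟨[], rfl⟩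

lemma Rset_subaut (δ : A → X → A) (a : A) : IsSubaut δ (Rset δ a) := by
  refine ⟨⟨a, mem_Rset_self δ a⟩, ?_⟩
  rintro b ⟨p, rfl⟩ x
  exact ⟨p ++ [x], by rw [deltaStar_append]; rfl⟩

lemma Rset_subset {δ : A → X → A} {B : Set A} (hB : IsSubaut δ B) {a : A}
    (ha : a ∈ B) : Rset δ a ⊆ B := by
  rintro b ⟨p, rfl⟩; exact deltaStar_mem hB ha p

lemma Rset_delta_subset (δ : A → X → A) (a : A) (x : X) :
    Rset δ (δ a x) ⊆ Rset δ a := by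
  rintro b ⟨p, rfl⟩; exact ⟨x :: p, rfl⟩

lemma hom_deltaStar {δ : A → X → A} {φ : A → A}
    (hφ : ∀ a x, φ (δ a x) = δ (φ a) x) (a : A) (p : List X) :
    φ (deltaStar δ a p) = deltaStar δ (φ a) p := by
  induction p generalizing a with
  | nil => rfl
  | cons x p ih => simp [deltaStar, ih, hφ]

lemma exists_min [Finite A] {δ : A → X → A} {B : Set A} (hB : IsSubaut δ B) :
    ∃ K, K ⊆ B ∧ IsMinimalSubaut δ K := by
  classical
  set s : Set (Set A) := {C | C ⊆ B ∧ IsSubaut δ C} with hs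
  have hne : s.Nonempty := ⟨B, le_refl B, hB⟩
  obtain ⟨K, hKs, hKmin⟩ := Set.exists_min_image s Set.ncard (Set.toFinite s) hne
  refine ⟨K, hKs.1, hKs.2, ?_⟩
  intro C hCK hC
  have hCs : C ∈ s := ⟨hCK.trans hKs.1, hC⟩
  exact Set.eq_of_subset_of_ncard_le hCK (hKmin C hCs) (Set.toFinite K)

lemma min_unique {δ : A → X → A} (hr : Retractable δ) {a : A} {K₁ K₂ : Set A}
    (h1 : IsMinimalSubaut δ K₁) (h2 : IsMinimalSubaut δ K₂)
    (s1 : K₁ ⊆ Rset δ a) (s2 : K₂ ⊆ Rset δ a) : K₁ = K₂ := by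
  have hU : IsSubaut δ (K₁ ∪ K₂) := by
    refine ⟨h1.1.1.mono Set.subset_union_left, ?_⟩
    rintro b (hb | hb) x
    · exact Or.inl (h1.1.2 b hb x)
    · exact Or.inr (h2.1.2 b hb x)
  obtain ⟨φ, hφ1, hφ2, hφ3⟩ := hr _ hU
  have hne : (K₁ ∩ K₂).Nonempty := by
    rcases hφ1 a with hA | hA
    · obtain ⟨c, hc⟩ := h2.1.1
      obtain ⟨p, hp⟩ := s2 hc
      have hfix : φ c = c := hφ2 c (Or.inr hc)
      have : φ c ∈ K₁ := by
        rw [← hp, hom_deltaStar hφ3]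
        exact deltaStar_mem h1.1 hA p
      exact ⟨c, by rwa [hfix] at this, hc⟩
    · obtain ⟨c, hc⟩ := h1.1.1
      obtain ⟨p, hp⟩ := s1 hc
      have hfix : φ c = c := hφ2 c (Or.inl hc)
      have : φ c ∈ K₂ := by
        rw [← hp, hom_deltaStar hφ3]
        exact deltaStar_mem h2.1 hA p
      exact ⟨c, hc, by rwa [hfix] at this⟩
  have hI : IsSubaut δ (K₁ ∩ K₂) := by
    refine ⟨hne, ?_⟩
    rintro b ⟨hb1, hb2⟩ x
    exact ⟨h1.1.2 b hb1 x, h2.1.2 b hb2 x⟩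
  exact (h1.2 _ Set.inter_subset_left hI).symm.trans (h2.2 _ Set.inter_subset_right hI)

end Aux

/-- Theorem 2, (i) ⇔ (iii). -/
theorem stmt_8 {A X : Type*} [Finite A] [Nonempty A] [Nonempty X]
    (δ : A → X → A) :
    Retractable δ ↔
      ∃ (n : ℕ) (π : A → Fin n), Function.Surjective π ∧
        (∀ a x, π (δ a x) = π a) ∧
        (∀ i, RetractableOn δ (π ⁻¹' {i})) ∧
        (∀ i, ∃ K : Set A, K ⊆ π ⁻¹' {i} ∧ IsSubaut δ K ∧
          ∀ C ⊆ π ⁻¹' {i}, IsSubaut δ C → K ⊆ C) ∧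
        ∀ i j, ∃ φ : A → A, (∀ a ∈ π ⁻¹' {i}, φ a ∈ π ⁻¹' {j}) ∧
          ∀ a ∈ π ⁻¹' {i}, ∀ x, φ (δ a x) = δ (φ a) x := by
  classical
  constructor
  · -- Forward direction
    intro hr
    have hK : ∀ a : A, ∃ K, K ⊆ Rset δ a ∧ IsMinimalSubaut δ K :=
      fun a => exists_min (Rset_subaut δ a)
    choose f hf1 hf2 using hK
    have hfδ : ∀ a x, f (δ a x) = f a := fun a x =>
      min_unique hr (hf2 _) (hf2 _)
        ((hf1 (δ a x)).trans (Rset_delta_subset δ a x)) (hf1 a)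
    obtain ⟨n, ⟨e⟩⟩ := Finite.exists_equiv_fin (Set.range f)
    set π : A → Fin n := fun a => e ⟨f a, Set.mem_range_self a⟩ with hπ
    have hπeq : ∀ {a b : A}, f a = f b → π a = π b := by
      intro a b h
      simp only [hπ]
      congr 1
      exact Subtype.ext h
    have hπeq' : ∀ {a b : A}, π a = π b → f a = f b := by
      intro a b h
      have := e.injective h
      exact congrArg Subtype.val this
    have hsurj : Function.Surjective π := by
      intro i
      obtain ⟨a, ha⟩ := (e.symm i).2
      refine ⟨a, ?_⟩
      have h2 : (⟨f a, Set.mem_range_self a⟩ : Set.range f) = e.symm i :=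
        Subtype.ext ha
      show e ⟨f a, Set.mem_range_self a⟩ = i
      rw [h2, e.apply_symm_apply]
    -- each f a lies in the fiber of π a
    have hKfib : ∀ a : A, f a ⊆ π ⁻¹' {π a} := by
      intro a k hk
      have hsub : f k ⊆ f a :=
        (hf1 k).trans (Rset_subset (hf2 a).1 hk)
      have : f k = f a := (hf2 a).2 (f k) hsub (hf2 k).1
      exact hπeq this
    refine ⟨n, π, hsurj, fun a x => hπeq (hfδ a x), ?_, ?_, ?_⟩
    · -- RetractableOn each fiber
      intro i C _ hC
      obtain ⟨φ, h1, h2, h3⟩ := hr C hC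
      exact ⟨φ, fun a _ => h1 a, h2, fun a _ x => h3 a x⟩
    · -- kernels
      intro i
      obtain ⟨a0, ha0⟩ := hsurj i
      refine ⟨f a0, by rw [← ha0]; exact hKfib a0, (hf2 a0).1, ?_⟩
      intro C hCfib hC
      obtain ⟨c, hc⟩ := hC.1
      have hcf : π c = π a0 := by
        have := hCfib hc
        simp only [Set.mem_preimage, Set.mem_singleton_iff] at this
        rw [this, ha0]
      have : f c = f a0 := hπeq' hcf
      rw [← this]
      exact (hf1 c).trans (Rset_subset hC hc)
    · -- homomorphisms between fibers
      intro i j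
      obtain ⟨a0, ha0⟩ := hsurj j
      obtain ⟨φ, h1, h2, h3⟩ := hr (f a0) (hf2 a0).1
      refine ⟨φ, fun a _ => ?_, fun a _ x => h3 a x⟩
      have := hKfib a0 (h1 a)
      rwa [ha0] at this
  · -- Backward direction
    rintro ⟨n, π, hsurj, hπδ, hret, _, hhom⟩
    intro B hB
    obtain ⟨b0, hb0⟩ := hB.1
    set j0 := π b0 with hj0def
    have hj0 : (B ∩ π ⁻¹' {j0}).Nonempty := ⟨b0, hb0, rfl⟩
    -- retractions onto the intersections with fibers
    have hmain : ∀ i : Fin n, ∃ φ : A → A, (B ∩ π ⁻¹' {i}).Nonempty →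
        (∀ a ∈ π ⁻¹' {i}, φ a ∈ B ∩ π ⁻¹' {i}) ∧
        (∀ c ∈ B ∩ π ⁻¹' {i}, φ c = c) ∧
        ∀ a ∈ π ⁻¹' {i}, ∀ x, φ (δ a x) = δ (φ a) x := by
      intro i
      by_cases h : (B ∩ π ⁻¹' {i}).Nonempty
      · have hsub : IsSubaut δ (B ∩ π ⁻¹' {i}) := by
          refine ⟨h, ?_⟩
          rintro b ⟨hbB, hbi⟩ x
          exact ⟨hB.2 b hbB x, by
            simp only [Set.mem_preimage, Set.mem_singleton_iff] at hbi ⊢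
            rw [hπδ, hbi]⟩
        obtain ⟨φ, h1, h2, h3⟩ := hret i (B ∩ π ⁻¹' {i}) Set.inter_subset_right hsub
        exact ⟨φ, fun _ => ⟨h1, h2, h3⟩⟩
      · exact ⟨id, fun hne => absurd hne h⟩
    choose φs hφs using hmain
    choose ψ hψ1 hψ2 using fun i => hhom i j0
    set Φ : A → A := fun a =>
      if (B ∩ π ⁻¹' {π a}).Nonempty then φs (π a) a
      else φs j0 (ψ (π a) a) with hΦ
    have hmem : ∀ a : A, a ∈ π ⁻¹' {π a} := fun a => rfl
    refine ⟨Φ, ?_, ?_, ?_⟩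
    · intro a
      simp only [hΦ]
      split_ifs with h
      · exact ((hφs _ h).1 a (hmem a)).1
      · exact ((hφs j0 hj0).1 _ (hψ1 (π a) a (hmem a))).1
    · intro b hb
      have h : (B ∩ π ⁻¹' {π b}).Nonempty := ⟨b, hb, rfl⟩
      simp only [hΦ, if_pos h]
      exact (hφs _ h).2.1 b ⟨hb, rfl⟩
    · intro a x
      have hcond : (B ∩ π ⁻¹' {π (δ a x)}) = (B ∩ π ⁻¹' {π a}) := by
        rw [hπδ]
      simp only [hΦ, hπδ, hcond]
      split_ifs with h
      · exact (hφs _ h).2.2 a (hmem a) x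
      · rw [hψ2 (π a) a (hmem a) x]
        exact (hφs j0 hj0).2.2 _ (hψ1 (π a) a (hmem a)) x
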